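/- Two self-nested finite unordered rooted trees with the same height profile are isomorphic; equivalently, a self-nested tree can be uniquely reconstructed from its height profile. -/

import Mathlib

/-- A finite rooted tree whose vertices form a finite subset `supp` of `ℕ`.
`par` maps each vertex to its parent; the root is a fixed point of `par`
(so it has no parent), and every vertex reaches the root by iterating `par`
(connectedness / acyclicity). -/
structure FTree where
  supp : Finset ℕ
  root : ℕ
  root_mem : root ∈ supp
  par : ℕ → ℕ
  par_mem : ∀ v ∈ supp, par v ∈ supp
  par_root : par root = root
  reach : ∀ v ∈ supp, ∃ n, par^[n] v = root

namespace FTree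

/-- Depth of a vertex: least number of parent steps needed to reach the root. -/
noncomputable def depth (t : FTree) (v : ℕ) : ℕ :=
  if h : v ∈ t.supp then Nat.find (t.reach v h) else 0

/-- `w` is a (weak) descendant of `v` in `t`. -/
def IsDesc (t : FTree) (v w : ℕ) : Prop :=
  w ∈ t.supp ∧ ∃ n ≤ t.depth w, t.par^[n] w = v

open Classical in
/-- Vertex set of the subtree `t[v]` rooted at `v`. -/
noncomputable def desc (t : FTree) (v : ℕ) : Finset ℕ :=
  t.supp.filter (fun w => t.IsDesc v w)

/-- Height of the subtree `t[v]` rooted at `v`. -/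
noncomputable def heightAt (t : FTree) (v : ℕ) : ℕ :=
  (t.desc v).sup (fun w => t.depth w) - t.depth v

/-- Height of the tree. -/
noncomputable def height (t : FTree) : ℕ := t.heightAt t.root

/-- The set of children of `v` in `t`. -/
def children (t : FTree) (v : ℕ) : Finset ℕ :=
  t.supp.filter (fun w => t.par w = v ∧ w ≠ t.root)

open Classical in
/-- `γ_h(v)`: number of children of `v` whose subtree has height `h`. -/
noncomputable def gam (t : FTree) (v h : ℕ) : ℕ :=
  ((t.children v).filter (fun c => t.heightAt c = h)).card

/-- The subtree of `t` rooted at `v` is isomorphic (as an unordered rooted tree)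
to the subtree of `s` rooted at `w`: a bijection between the vertex sets sending
root to root and commuting with the parent maps (i.e. mapping edges to edges). -/
def SubtreeIso (t : FTree) (v : ℕ) (s : FTree) (w : ℕ) : Prop :=
  ∃ φ : ℕ → ℕ, Set.BijOn φ (t.desc v : Set ℕ) (s.desc w : Set ℕ) ∧ φ v = w ∧
    ∀ x ∈ t.desc v, x ≠ v → φ (t.par x) = s.par (φ x)

/-- Isomorphism of rooted trees. -/
def TreeIso (t s : FTree) : Prop := SubtreeIso t t.root s s.root

/-- A tree is self-nested if any two of its subtrees of the same height
are isomorphic. -/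
def SelfNested (t : FTree) : Prop :=
  ∀ v ∈ t.supp, ∀ w ∈ t.supp, t.heightAt v = t.heightAt w → SubtreeIso t v t w

open Classical in
/-- Height profile entry `ρ_t(h1,h2)`: the multiset (family up to permutation) of
the values `γ_{h2}(v)` over all vertices `v` of `t` with `H(t[v]) = h1`. -/
noncomputable def profile (t : FTree) (h1 h2 : ℕ) : Multiset ℕ :=
  (t.supp.filter (fun v => t.heightAt v = h1)).val.map (fun v => t.gam v h2)

/-- Number of vertices of `t`. -/
def numV (t : FTree) : ℕ := t.supp.card

/-- `a` is a (weak) ancestor of `b`. -/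
def IsAnc (t : FTree) (a b : ℕ) : Prop := ∃ n, t.par^[n] b = a

/-- `a` is a proper ancestor of `b`. -/
def ProperAnc (t : FTree) (a b : ℕ) : Prop := a ≠ b ∧ t.IsAnc a b

/-- `l` is the least common ancestor of `a` and `b`. -/
def IsLCA (t : FTree) (a b l : ℕ) : Prop :=
  l ∈ t.supp ∧ t.IsAnc l a ∧ t.IsAnc l b ∧
    ∀ m ∈ t.supp, t.IsAnc m a → t.IsAnc m b → t.IsAnc m l

/-- `φ`, restricted to the domain `D ⊆ t.supp`, is a constrained mapping in the
sense of Zhang from `t` to `s`: a one-to-one correspondence preserving the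
ancestor order, satisfying moreover Zhang's condition on least common ancestors. -/
def ZhangMapping (t s : FTree) (D : Finset ℕ) (φ : ℕ → ℕ) : Prop :=
  D ⊆ t.supp ∧ (∀ x ∈ D, φ x ∈ s.supp) ∧ Set.InjOn φ (D : Set ℕ) ∧
  (∀ a ∈ D, ∀ b ∈ D, (t.ProperAnc a b ↔ s.ProperAnc (φ a) (φ b))) ∧
  (∀ v1 ∈ D, ∀ v2 ∈ D, ∀ v3 ∈ D, ∀ l l',
    t.IsLCA v1 v2 l → s.IsLCA (φ v1) (φ v2) l' →
    (t.ProperAnc l v3 ↔ s.ProperAnc l' (φ v3)))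

/-- Allowed inserting operation (AI): adding a new internal vertex `w` as a child of
`v`, making `w` the parent of the child `c` of `v`; allowed only if
`H(t[c]) + 1 < H(t[v])`. -/
def InsertAI (t θ : FTree) : Prop :=
  ∃ v c w, v ∈ t.supp ∧ c ∈ t.children v ∧ w ∉ t.supp ∧
    t.heightAt c + 1 < t.heightAt v ∧
    θ.supp = insert w t.supp ∧ θ.root = t.root ∧
    θ.par w = v ∧ θ.par c = w ∧ ∀ x ∈ t.supp, x ≠ c → θ.par x = t.par x

/-- Allowed inserting operation (AS): attaching a tree `s` as a new child subtree of
`v`; allowed only if `H(s) + 1 ≤ H(t[v])`. -/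
def InsertAS (t θ : FTree) : Prop :=
  ∃ (v : ℕ) (s : FTree), v ∈ t.supp ∧ Disjoint s.supp t.supp ∧
    s.height + 1 ≤ t.heightAt v ∧
    θ.supp = t.supp ∪ s.supp ∧ θ.root = t.root ∧ θ.par s.root = v ∧
    (∀ x ∈ t.supp, θ.par x = t.par x) ∧ (∀ x ∈ s.supp, x ≠ s.root → θ.par x = s.par x)

/-- One allowed inserting operation. -/
def InsertStep (t θ : FTree) : Prop := InsertAI t θ ∨ InsertAS t θ

/-- Allowed deleting operation (DI): deleting an internal vertex `v`, child of `u`,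
having a unique child `c` (which becomes a child of `u`); allowed only if `u` has
another child `v'` with `H(t[v']) ≥ H(t[v])`. -/
def DeleteDI (t θ : FTree) : Prop :=
  ∃ u v c, v ∈ t.children u ∧ t.children v = {c} ∧
    (∃ v' ∈ t.children u, v' ≠ v ∧ t.heightAt v ≤ t.heightAt v') ∧
    θ.supp = t.supp.erase v ∧ θ.root = t.root ∧ θ.par c = u ∧
    ∀ x ∈ t.supp, x ≠ v → x ≠ c → θ.par x = t.par x

/-- Allowed deleting operation (DS): deleting the whole subtree rooted at a child `w`
of `v`; allowed only if `v` has another child `w'` with `H(t[w']) + 1 = H(t[v])`. -/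
def DeleteDS (t θ : FTree) : Prop :=
  ∃ v w, w ∈ t.children v ∧
    (∃ w' ∈ t.children v, w' ≠ w ∧ t.heightAt w' + 1 = t.heightAt v) ∧
    θ.supp = t.supp \ t.desc w ∧ θ.root = t.root ∧
    ∀ x ∈ θ.supp, θ.par x = t.par x

/-- One allowed deleting operation. -/
def DeleteStep (t θ : FTree) : Prop := DeleteDI t θ ∨ DeleteDS t θ

/-- A general single-vertex inserting operation: a new vertex `w` is added as a child
of `v`, and the vertices of a subset `C` of the children of `v` become children of `w`. -/
def GeneralInsert (t θ : FTree) : Prop :=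
  ∃ (v w : ℕ) (C : Finset ℕ), v ∈ t.supp ∧ w ∉ t.supp ∧ C ⊆ t.children v ∧
    θ.supp = insert w t.supp ∧ θ.root = t.root ∧ θ.par w = v ∧
    (∀ x ∈ C, θ.par x = w) ∧ ∀ x ∈ t.supp, x ∉ C → θ.par x = t.par x

/-- Cost of a constrained mapping with domain `D`: vertices of `t` not in the domain
are deleted, vertices of `s` not in the image are inserted (unit costs). -/
def mappingCost (t s : FTree) (D : Finset ℕ) (φ : ℕ → ℕ) : ℕ :=
  (t.numV - D.card) + (s.numV - (D.image φ).card)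

/-- Zhang's constrained edit distance between unordered trees: the minimal cost
associated with a constrained mapping between `t` and `s`. -/
noncomputable def DZ (t s : FTree) : ℕ :=
  sInf { c | ∃ (D : Finset ℕ) (φ : ℕ → ℕ), ZhangMapping t s D φ ∧ c = mappingCost t s D φ }

end FTree

namespace FTree

variable {t s : FTree}

lemma depth_spec {v : ℕ} (hv : v ∈ t.supp) : t.par^[t.depth v] v = t.root := by
  rw [depth, dif_pos hv]; exact Nat.find_spec (t.reach v hv)

lemma depth_le {v n : ℕ} (hv : v ∈ t.supp) (h : t.par^[n] v = t.root) : t.depth v ≤ n := by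
  rw [depth, dif_pos hv]; exact Nat.find_le h

lemma depth_min {v n : ℕ} (hv : v ∈ t.supp) (h : n < t.depth v) : t.par^[n] v ≠ t.root := by
  rw [depth, dif_pos hv] at h; exact Nat.find_min (t.reach v hv) h

lemma depth_root : t.depth t.root = 0 :=
  Nat.le_zero.1 (depth_le t.root_mem (by simp))

lemma eq_root_of_depth_zero {v : ℕ} (hv : v ∈ t.supp) (h : t.depth v = 0) : v = t.root := by
  have hs := depth_spec hv; rwa [h] at hs

lemma depth_par {v : ℕ} (hv : v ∈ t.supp) (hr : v ≠ t.root) :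
    t.depth (t.par v) + 1 = t.depth v := by
  have h1 : 0 < t.depth v := Nat.pos_of_ne_zero (fun h => hr (eq_root_of_depth_zero hv h))
  have hp : t.par v ∈ t.supp := t.par_mem v hv
  have le1 : t.depth (t.par v) ≤ t.depth v - 1 := by
    apply depth_le hp
    have h2 : t.par^[t.depth v - 1] (t.par v) = t.par^[t.depth v] v := by
      rw [← Function.iterate_succ_apply]; congr 1; omega
    rw [h2]; exact depth_spec hv
  rcases Nat.lt_or_ge (t.depth (t.par v)) (t.depth v - 1) with h | h
  · exfalso
    apply depth_min hv (n := t.depth (t.par v) + 1) (by omega)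
    rw [Function.iterate_succ_apply]
    exact depth_spec hp
  · omega

lemma iter_mem_depth {v : ℕ} (hv : v ∈ t.supp) :
    ∀ n, n ≤ t.depth v → t.par^[n] v ∈ t.supp ∧ t.depth (t.par^[n] v) + n = t.depth v := by
  intro n
  induction n with
  | zero => exact fun _ => ⟨hv, rfl⟩
  | succ n ih =>
    intro hn
    obtain ⟨m1, m2⟩ := ih (by omega)
    have hne : t.par^[n] v ≠ t.root := by
      intro h; rw [h, depth_root] at m2; omega
    rw [Function.iterate_succ_apply']
    have hd := depth_par m1 hne
    exact ⟨t.par_mem _ m1, by omega⟩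

lemma mem_desc {v w : ℕ} : w ∈ t.desc v ↔ w ∈ t.supp ∧ ∃ n, n ≤ t.depth w ∧ t.par^[n] w = v := by
  classical
  unfold desc
  rw [Finset.mem_filter]
  simp only [IsDesc]
  tauto

lemma mem_supp_of_mem_desc {v w : ℕ} (h : w ∈ t.desc v) : w ∈ t.supp := (mem_desc.1 h).1

lemma self_mem_desc {v : ℕ} (hv : v ∈ t.supp) : v ∈ t.desc v :=
  mem_desc.2 ⟨hv, 0, by simp⟩

lemma desc_facts {v w : ℕ} (h : w ∈ t.desc v) :
    v ∈ t.supp ∧ t.depth v ≤ t.depth w ∧ t.par^[t.depth w - t.depth v] w = v := by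
  obtain ⟨hw, n, hn, he⟩ := mem_desc.1 h
  obtain ⟨m1, m2⟩ := iter_mem_depth hw n hn
  rw [he] at m1 m2
  have hn' : n = t.depth w - t.depth v := by omega
  refine ⟨m1, by omega, ?_⟩
  rw [← hn']; exact he

lemma eq_of_mem_desc_le {v w : ℕ} (h : w ∈ t.desc v) (hd : t.depth w ≤ t.depth v) : w = v := by
  obtain ⟨_, hle, he⟩ := desc_facts h
  have h0 : t.depth w - t.depth v = 0 := by omega
  rw [h0] at he; exact he

lemma desc_trans {u v w : ℕ} (h1 : v ∈ t.desc u) (h2 : w ∈ t.desc v) : w ∈ t.desc u := by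
  obtain ⟨hu, hle1, he1⟩ := desc_facts h1
  obtain ⟨hv, hle2, he2⟩ := desc_facts h2
  refine mem_desc.2 ⟨mem_supp_of_mem_desc h2,
    (t.depth v - t.depth u) + (t.depth w - t.depth v), by omega, ?_⟩
  rw [Function.iterate_add_apply, he2, he1]

lemma desc_mono {u v : ℕ} (h : v ∈ t.desc u) : t.desc v ⊆ t.desc u :=
  fun _ hw => desc_trans h hw

lemma eq_root_of_root_mem_desc {v : ℕ} (h : t.root ∈ t.desc v) : v = t.root := by
  obtain ⟨_, hle, he⟩ := desc_facts h
  rw [depth_root] at hle he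
  have h0 : 0 - t.depth v = 0 := by omega
  rw [h0] at he; exact he.symm

lemma par_mem_desc {v x : ℕ} (hx : x ∈ t.desc v) (hxv : x ≠ v) :
    t.par x ∈ t.desc v ∧ t.depth (t.par x) + 1 = t.depth x := by
  obtain ⟨hv, hle, he⟩ := desc_facts hx
  have hxs : x ∈ t.supp := mem_supp_of_mem_desc hx
  have hlt : t.depth v < t.depth x := by
    rcases Nat.lt_or_ge (t.depth v) (t.depth x) with h | h
    · exact h
    · exact absurd (eq_of_mem_desc_le hx h) hxv
  have hxr : x ≠ t.root := by
    intro h; rw [h] at hx; exact hxv (h.trans (eq_root_of_root_mem_desc hx).symm)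
  have hdp := depth_par hxs hxr
  refine ⟨mem_desc.2 ⟨t.par_mem x hxs, t.depth (t.par x) - t.depth v, by omega, ?_⟩, hdp⟩
  have h1 : t.par^[t.depth (t.par x) - t.depth v] (t.par x)
      = t.par^[(t.depth (t.par x) - t.depth v) + 1] x := (Function.iterate_succ_apply _ _ _).symm
  rw [h1]
  have h2 : (t.depth (t.par x) - t.depth v) + 1 = t.depth x - t.depth v := by omega
  rw [h2]; exact he

lemma mem_children {v c : ℕ} : c ∈ t.children v ↔ c ∈ t.supp ∧ t.par c = v ∧ c ≠ t.root :=
  Finset.mem_filter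

lemma child_mem_desc {v c : ℕ} (hc : c ∈ t.children v) :
    c ∈ t.desc v ∧ t.depth c = t.depth v + 1 ∧ v ∈ t.supp := by
  obtain ⟨hcs, hp, hr⟩ := mem_children.1 hc
  have hv : v ∈ t.supp := hp ▸ t.par_mem c hcs
  have hd := depth_par hcs hr
  rw [hp] at hd
  exact ⟨mem_desc.2 ⟨hcs, 1, by omega, by simpa using hp⟩, by omega, hv⟩

lemma anc_spec {v x : ℕ} (hx : x ∈ t.desc v) (hxv : x ≠ v) :
    t.par^[t.depth x - t.depth v - 1] x ∈ t.children v ∧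
      x ∈ t.desc (t.par^[t.depth x - t.depth v - 1] x) := by
  obtain ⟨hv, hle, he⟩ := desc_facts hx
  have hxs := mem_supp_of_mem_desc hx
  have hlt : t.depth v < t.depth x := by
    rcases Nat.lt_or_ge (t.depth v) (t.depth x) with h | h
    · exact h
    · exact absurd (eq_of_mem_desc_le hx h) hxv
  obtain ⟨hms, hmd⟩ := iter_mem_depth hxs (t.depth x - t.depth v - 1) (by omega)
  have hdm : t.depth (t.par^[t.depth x - t.depth v - 1] x) = t.depth v + 1 := by omega
  have hpar : t.par (t.par^[t.depth x - t.depth v - 1] x) = v := by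
    have h1 : t.par (t.par^[t.depth x - t.depth v - 1] x)
        = t.par^[(t.depth x - t.depth v - 1) + 1] x :=
      (Function.iterate_succ_apply' t.par _ x).symm
    rw [h1]
    have h2 : t.depth x - t.depth v - 1 + 1 = t.depth x - t.depth v := by omega
    rw [h2]; exact he
  have hnr : t.par^[t.depth x - t.depth v - 1] x ≠ t.root := by
    intro h; rw [h, depth_root] at hdm; omega
  exact ⟨mem_children.2 ⟨hms, hpar, hnr⟩,
    mem_desc.2 ⟨hxs, t.depth x - t.depth v - 1, by omega, rfl⟩⟩

lemma anc_unique {v c x : ℕ} (hc : c ∈ t.children v) (hx : x ∈ t.desc c) :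
    t.par^[t.depth x - t.depth v - 1] x = c := by
  obtain ⟨_, hd, _⟩ := child_mem_desc hc
  obtain ⟨_, hle, he⟩ := desc_facts hx
  have h1 : t.depth x - t.depth v - 1 = t.depth x - t.depth c := by omega
  rw [h1]; exact he

private lemma sup_sub (A : Finset ℕ) (f : ℕ → ℕ) (c : ℕ) :
    A.sup f - c = A.sup (fun x => f x - c) := by
  apply le_antisymm
  · rw [tsub_le_iff_right]
    apply Finset.sup_le
    intro x hx
    calc f x ≤ (f x - c) + c := by omega
    _ ≤ A.sup (fun x => f x - c) + c := Nat.add_le_add_right (Finset.le_sup (f := fun x => f x - c) hx) c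
  · apply Finset.sup_le
    intro x hx
    exact Nat.sub_le_sub_right (Finset.le_sup hx) c

lemma heightAt_eq_sup (t : FTree) (v : ℕ) :
    t.heightAt v = (t.desc v).sup (fun w => t.depth w - t.depth v) := by
  unfold heightAt; exact sup_sub _ _ _

lemma heightAt_lt_of_child {v c : ℕ} (hc : c ∈ t.children v) :
    t.heightAt c < t.heightAt v := by
  obtain ⟨hcd, hd, hv⟩ := child_mem_desc hc
  have hcs : c ∈ t.supp := (mem_children.1 hc).1
  have h1 : t.depth c ≤ (t.desc c).sup (fun w => t.depth w) :=
    Finset.le_sup (f := fun w => t.depth w) (self_mem_desc hcs)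
  have h2 : (t.desc c).sup (fun w => t.depth w) ≤ (t.desc v).sup (fun w => t.depth w) :=
    Finset.sup_mono (desc_mono hcd)
  unfold heightAt
  omega

lemma heightAt_le_height {v : ℕ} (hv : v ∈ t.supp) : t.heightAt v ≤ t.height := by
  have hsub : t.desc v ⊆ t.desc t.root := fun w hw =>
    mem_desc.2 ⟨mem_supp_of_mem_desc hw, t.depth w, le_refl _, depth_spec (mem_supp_of_mem_desc hw)⟩
  have h2 : (t.desc v).sup (fun w => t.depth w) ≤ (t.desc t.root).sup (fun w => t.depth w) :=
    Finset.sup_mono hsub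
  unfold height heightAt
  rw [depth_root]
  omega

section Iso

variable {φ : ℕ → ℕ} {v w : ℕ}

lemma iso_w_mem (hbij : Set.BijOn φ (t.desc v : Set ℕ) (s.desc w : Set ℕ))
    (hroot : φ v = w) (hv : v ∈ t.supp) : w ∈ s.desc w := by
  have h1 : φ v ∈ (s.desc w : Set ℕ) := hbij.mapsTo (Finset.mem_coe.2 (self_mem_desc hv))
  rw [hroot] at h1
  exact Finset.mem_coe.1 h1

lemma iso_depth (hbij : Set.BijOn φ (t.desc v : Set ℕ) (s.desc w : Set ℕ))
    (hroot : φ v = w)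
    (hpar : ∀ x ∈ t.desc v, x ≠ v → φ (t.par x) = s.par (φ x)) (hv : v ∈ t.supp) :
    ∀ n, ∀ y ∈ t.desc v, t.depth y - t.depth v = n → s.depth (φ y) = s.depth w + n := by
  intro n
  induction n with
  | zero =>
    intro y hy hd
    have h1 : y = v := eq_of_mem_desc_le hy (by have := (desc_facts hy).2.1; omega)
    rw [h1, hroot]
    omega
  | succ n ih =>
    intro y hy hd
    have hyv : y ≠ v := by
      intro h; rw [h, Nat.sub_self] at hd; omega
    obtain ⟨hpd, hpd2⟩ := par_mem_desc hy hyv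
    have h1 := ih (t.par y) hpd (by have := (desc_facts hy).2.1; omega)
    have h2 : φ (t.par y) = s.par (φ y) := hpar y hy hyv
    have hφy : φ y ∈ s.desc w := Finset.mem_coe.1 (hbij.mapsTo (Finset.mem_coe.2 hy))
    have hφys : φ y ∈ s.supp := mem_supp_of_mem_desc hφy
    have hφyw : φ y ≠ w := by
      intro h
      exact hyv (hbij.injOn (Finset.mem_coe.2 hy) (Finset.mem_coe.2 (self_mem_desc hv))
        (by rw [h, hroot]))
    have hφyr : φ y ≠ s.root := by
      intro h
      have h3 := eq_root_of_root_mem_desc (h ▸ hφy)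
      exact hφyw (h.trans h3.symm)
    have h4 := depth_par hφys hφyr
    rw [h2] at h1
    omega

lemma iso_comm (hbij : Set.BijOn φ (t.desc v : Set ℕ) (s.desc w : Set ℕ))
    (hroot : φ v = w)
    (hpar : ∀ x ∈ t.desc v, x ≠ v → φ (t.par x) = s.par (φ x)) (hv : v ∈ t.supp) :
    ∀ n, ∀ y ∈ t.desc v, n ≤ t.depth y - t.depth v →
      t.par^[n] y ∈ t.desc v ∧ φ (t.par^[n] y) = s.par^[n] (φ y) := by
  intro n
  induction n with
  | zero => exact fun y hy _ => ⟨hy, rfl⟩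
  | succ n ih =>
    intro y hy hn
    have hyv : y ≠ v := by
      intro h; rw [h, Nat.sub_self] at hn; omega
    obtain ⟨hpd, hpdd⟩ := par_mem_desc hy hyv
    have h1 := ih (t.par y) hpd (by have := (desc_facts hy).2.1; omega)
    rw [Function.iterate_succ_apply]
    refine ⟨h1.1, ?_⟩
    rw [h1.2, hpar y hy hyv]
    exact (Function.iterate_succ_apply s.par n (φ y)).symm

lemma iso_restrict (hbij : Set.BijOn φ (t.desc v : Set ℕ) (s.desc w : Set ℕ))
    (hroot : φ v = w)
    (hpar : ∀ x ∈ t.desc v, x ≠ v → φ (t.par x) = s.par (φ x)) (hv : v ∈ t.supp)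
    {x : ℕ} (hx : x ∈ t.desc v) :
    Set.BijOn φ (t.desc x : Set ℕ) (s.desc (φ x) : Set ℕ) ∧
      ∀ y ∈ t.desc x, y ≠ x → φ (t.par y) = s.par (φ y) := by
  have hxs : x ∈ t.supp := mem_supp_of_mem_desc hx
  have hdvx : t.depth v ≤ t.depth x := (desc_facts hx).2.1
  constructor
  · refine ⟨?_, ?_, ?_⟩
    · -- MapsTo
      intro y hy
      rw [Finset.mem_coe] at hy ⊢
      have hyv : y ∈ t.desc v := desc_trans hx hy
      obtain ⟨_, hdxy, hey⟩ := desc_facts hy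
      have hm : t.depth y - t.depth x ≤ t.depth y - t.depth v := by omega
      obtain ⟨_, hcomm⟩ := iso_comm hbij hroot hpar hv (t.depth y - t.depth x) y hyv hm
      rw [hey] at hcomm
      have hdy := iso_depth hbij hroot hpar hv (t.depth y - t.depth v) y hyv rfl
      have hφys : φ y ∈ s.supp :=
        mem_supp_of_mem_desc (Finset.mem_coe.1 (hbij.mapsTo (Finset.mem_coe.2 hyv)))
      exact mem_desc.2 ⟨hφys, t.depth y - t.depth x, by omega, hcomm.symm⟩
    · -- InjOn
      exact hbij.injOn.mono (by intro y hy; exact Finset.mem_coe.2 (desc_trans hx (Finset.mem_coe.1 hy)))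
    · -- SurjOn
      intro z hz
      rw [Finset.mem_coe] at hz
      have hφx : φ x ∈ s.desc w := Finset.mem_coe.1 (hbij.mapsTo (Finset.mem_coe.2 hx))
      have hzw : z ∈ s.desc w := desc_trans hφx hz
      obtain ⟨y, hy, hyz⟩ := hbij.surjOn (Finset.mem_coe.2 hzw)
      rw [Finset.mem_coe] at hy
      have hdy := iso_depth hbij hroot hpar hv (t.depth y - t.depth v) y hy rfl
      have hdx := iso_depth hbij hroot hpar hv (t.depth x - t.depth v) x hx rfl
      have hdvy : t.depth v ≤ t.depth y := (desc_facts hy).2.1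
      obtain ⟨_, hdzx, hez⟩ := desc_facts hz
      rw [← hyz] at hez hdzx
      rw [hdy, hdx] at hdzx
      have hm : s.depth (φ y) - s.depth (φ x) = t.depth y - t.depth x := by
        rw [hdy, hdx]; omega
      rw [hm] at hez
      have hm2 : t.depth y - t.depth x ≤ t.depth y - t.depth v := by omega
      obtain ⟨hmem, hcomm⟩ := iso_comm hbij hroot hpar hv (t.depth y - t.depth x) y hy hm2
      rw [hez] at hcomm
      have hxy : t.par^[t.depth y - t.depth x] y = x :=
        hbij.injOn (Finset.mem_coe.2 hmem) (Finset.mem_coe.2 hx) hcomm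
      refine ⟨y, Finset.mem_coe.2 (mem_desc.2 ⟨mem_supp_of_mem_desc hy,
        t.depth y - t.depth x, by omega, hxy⟩), hyz⟩
  · intro y hy hyx
    have hyv : y ∈ t.desc v := desc_trans hx hy
    have hyv' : y ≠ v := by
      intro h
      by_cases hxv : x = v
      · exact hyx (h.trans hxv.symm)
      · have hd1 : t.depth v < t.depth x := by
          rcases Nat.lt_or_ge (t.depth v) (t.depth x) with h' | h'
          · exact h'
          · exact absurd (eq_of_mem_desc_le hx h') hxv
        have hd2 : t.depth x ≤ t.depth y := (desc_facts hy).2.1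
        rw [h] at hd2
        omega
    exact hpar y hyv hyv'

lemma iso_heightAt (hbij : Set.BijOn φ (t.desc v : Set ℕ) (s.desc w : Set ℕ))
    (hroot : φ v = w)
    (hpar : ∀ x ∈ t.desc v, x ≠ v → φ (t.par x) = s.par (φ x)) (hv : v ∈ t.supp) :
    s.heightAt w = t.heightAt v := by
  rw [heightAt_eq_sup, heightAt_eq_sup]
  apply le_antisymm
  · apply Finset.sup_le
    intro z hz
    obtain ⟨y, hy, hyz⟩ := hbij.surjOn (Finset.mem_coe.2 hz)
    rw [Finset.mem_coe] at hy
    have hdy := iso_depth hbij hroot hpar hv (t.depth y - t.depth v) y hy rfl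
    rw [← hyz, hdy]
    have h1 : s.depth w + (t.depth y - t.depth v) - s.depth w = t.depth y - t.depth v := by omega
    rw [h1]
    exact Finset.le_sup (f := fun y => t.depth y - t.depth v) hy
  · apply Finset.sup_le
    intro y hy
    have hφy : φ y ∈ s.desc w := Finset.mem_coe.1 (hbij.mapsTo (Finset.mem_coe.2 hy))
    have hdy := iso_depth hbij hroot hpar hv (t.depth y - t.depth v) y hy rfl
    calc t.depth y - t.depth v = s.depth (φ y) - s.depth w := by omega
    _ ≤ (s.desc w).sup (fun z => s.depth z - s.depth w) :=
        Finset.le_sup (f := fun z => s.depth z - s.depth w) hφy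

lemma iso_gam (hbij : Set.BijOn φ (t.desc v : Set ℕ) (s.desc w : Set ℕ))
    (hroot : φ v = w)
    (hpar : ∀ x ∈ t.desc v, x ≠ v → φ (t.par x) = s.par (φ x)) (hv : v ∈ t.supp)
    (k : ℕ) : t.gam v k = s.gam w k := by
  have hwd : w ∈ s.desc w := iso_w_mem hbij hroot hv
  have hws : w ∈ s.supp := mem_supp_of_mem_desc hwd
  have hdw0 : s.depth (s.root) = 0 := depth_root
  unfold gam
  apply Finset.card_bij (fun c _ => φ c)
  · -- maps into
    intro c hc
    obtain ⟨hcch, hck⟩ := Finset.mem_filter.1 hc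
    obtain ⟨hcd, hcdep, _⟩ := child_mem_desc hcch
    have hcv : c ≠ v := by intro h; rw [h] at hcdep; omega
    have hφc : φ c ∈ s.desc w := Finset.mem_coe.1 (hbij.mapsTo (Finset.mem_coe.2 hcd))
    have hφcs : φ c ∈ s.supp := mem_supp_of_mem_desc hφc
    have hdc := iso_depth hbij hroot hpar hv (t.depth c - t.depth v) c hcd rfl
    have hd1 : t.depth c - t.depth v = 1 := by omega
    rw [hd1] at hdc
    have hφcr : φ c ≠ s.root := by
      intro h; rw [h, depth_root] at hdc; omega
    have hφcpar : s.par (φ c) = w := by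
      rw [← hpar c hcd hcv]
      have h2 : t.par c = v := (mem_children.1 hcch).2.1
      rw [h2, hroot]
    obtain ⟨hrb, hrc⟩ := iso_restrict hbij hroot hpar hv hcd
    have hh : s.heightAt (φ c) = t.heightAt c :=
      iso_heightAt hrb rfl hrc (mem_supp_of_mem_desc hcd)
    exact Finset.mem_filter.2 ⟨mem_children.2 ⟨hφcs, hφcpar, hφcr⟩, by rw [hh, hck]⟩
  · -- inj
    intro c1 hc1 c2 hc2 he
    have h1 := (child_mem_desc (Finset.mem_filter.1 hc1).1).1
    have h2 := (child_mem_desc (Finset.mem_filter.1 hc2).1).1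
    exact hbij.injOn (Finset.mem_coe.2 h1) (Finset.mem_coe.2 h2) he
  · -- surj
    intro c' hc'
    obtain ⟨hcch, hck⟩ := Finset.mem_filter.1 hc'
    obtain ⟨hcd, hcdep, _⟩ := child_mem_desc hcch
    obtain ⟨y, hy, hyc⟩ := hbij.surjOn (Finset.mem_coe.2 hcd)
    rw [Finset.mem_coe] at hy
    have hyv : y ≠ v := by
      intro h
      rw [h, hroot] at hyc
      rw [← hyc] at hcdep
      omega
    have hpy : t.par y ∈ t.desc v := (par_mem_desc hy hyv).1
    have hpar1 : φ (t.par y) = s.par (φ y) := hpar y hy hyv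
    rw [hyc] at hpar1
    have hparc : s.par c' = w := (mem_children.1 hcch).2.1
    rw [hparc] at hpar1
    have hpyv : t.par y = v :=
      hbij.injOn (Finset.mem_coe.2 hpy) (Finset.mem_coe.2 (self_mem_desc hv))
        (by rw [hpar1, hroot])
    have hyr : y ≠ t.root := by
      intro h
      rw [h] at hy
      exact hyv (h.trans (eq_root_of_root_mem_desc hy).symm)
    have hych : y ∈ t.children v := mem_children.2 ⟨mem_supp_of_mem_desc hy, hpyv, hyr⟩
    obtain ⟨hrb, hrc⟩ := iso_restrict hbij hroot hpar hv hy
    have hh : s.heightAt (φ y) = t.heightAt y :=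
      iso_heightAt hrb rfl hrc (mem_supp_of_mem_desc hy)
    refine ⟨y, Finset.mem_filter.2 ⟨hych, ?_⟩, hyc⟩
    rw [← hh, hyc, hck]

lemma subtreeIso_gam {v w : ℕ} (h : SubtreeIso t v s w) (hv : v ∈ t.supp) (k : ℕ) :
    t.gam v k = s.gam w k := by
  obtain ⟨φ, hbij, hroot, hpar⟩ := h
  exact iso_gam hbij hroot hpar hv k

end Iso

lemma exists_matching :
    ∀ (n : ℕ) (A B : Finset ℕ) (f g : ℕ → ℕ), A.card = n →
      (∀ k, (A.filter fun a => f a = k).card = (B.filter fun b => g b = k).card) →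
      ∃ ψ : ℕ → ℕ, Set.BijOn ψ (A : Set ℕ) (B : Set ℕ) ∧ ∀ a ∈ A, g (ψ a) = f a := by
  intro n
  induction n with
  | zero =>
    intro A B f g hcard hfib
    have hA : A = ∅ := Finset.card_eq_zero.1 hcard
    have hB : B = ∅ := by
      rw [Finset.eq_empty_iff_forall_notMem]
      intro b hb
      have h1 : (B.filter fun x => g x = g b).card ≠ 0 := by
        apply Finset.card_ne_zero_of_mem (a := b)
        exact Finset.mem_filter.2 ⟨hb, rfl⟩
      rw [← hfib (g b), hA] at h1
      simp at h1
    subst hA; subst hB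
    exact ⟨id, by simp [Set.BijOn], by simp⟩
  | succ n ih =>
    intro A B f g hcard hfib
    have hA : A.Nonempty := Finset.card_pos.1 (by omega)
    obtain ⟨a, ha⟩ := hA
    have h1 : (B.filter fun b => g b = f a).card ≠ 0 := by
      rw [← hfib (f a)]
      exact Finset.card_ne_zero_of_mem (Finset.mem_filter.2 ⟨ha, rfl⟩)
    obtain ⟨b, hb⟩ := Finset.card_pos.1 (Nat.pos_of_ne_zero h1)
    obtain ⟨hbB, hgb⟩ := Finset.mem_filter.1 hb
    have hfib' : ∀ k, ((A.erase a).filter fun x => f x = k).card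
        = ((B.erase b).filter fun x => g x = k).card := by
      intro k
      rw [Finset.filter_erase, Finset.filter_erase]
      by_cases hk : k = f a
      · have ha' : a ∈ A.filter (fun x => f x = k) := Finset.mem_filter.2 ⟨ha, hk.symm⟩
        have hb' : b ∈ B.filter (fun x => g x = k) := Finset.mem_filter.2 ⟨hbB, hgb.trans hk.symm⟩
        rw [Finset.card_erase_of_mem ha', Finset.card_erase_of_mem hb', hfib]
      · have ha' : a ∉ A.filter (fun x => f x = k) :=
          fun hmem => hk ((Finset.mem_filter.1 hmem).2).symm
        have hb' : b ∉ B.filter (fun x => g x = k) :=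
          fun hmem => hk ((hgb.symm.trans (Finset.mem_filter.1 hmem).2).symm)
        rw [Finset.erase_eq_of_notMem ha', Finset.erase_eq_of_notMem hb', hfib]
    obtain ⟨ψ', hψ'bij, hψ'h⟩ := ih (A.erase a) (B.erase b) f g
      (by rw [Finset.card_erase_of_mem ha, hcard]; omega) hfib'
    refine ⟨fun x => if x = a then b else ψ' x, ⟨?_, ?_, ?_⟩, ?_⟩
    · intro x hx
      rw [Finset.mem_coe] at hx
      by_cases hxa : x = a
      · simp only [if_pos hxa]; exact Finset.mem_coe.2 hbB
      · simp only [if_neg hxa]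
        have h2 := hψ'bij.mapsTo (Finset.mem_coe.2 (Finset.mem_erase.2 ⟨hxa, hx⟩))
        rw [Finset.mem_coe] at h2
        exact Finset.mem_coe.2 (Finset.mem_of_mem_erase h2)
    · intro x hx y hy hxy
      rw [Finset.mem_coe] at hx hy
      by_cases hxa : x = a <;> by_cases hya : y = a
      · rw [hxa, hya]
      · exfalso
        simp only [if_pos hxa, if_neg hya] at hxy
        have h2 := hψ'bij.mapsTo (Finset.mem_coe.2 (Finset.mem_erase.2 ⟨hya, hy⟩))
        rw [Finset.mem_coe, ← hxy] at h2
        exact (Finset.mem_erase.1 h2).1 rfl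
      · exfalso
        simp only [if_neg hxa, if_pos hya] at hxy
        have h2 := hψ'bij.mapsTo (Finset.mem_coe.2 (Finset.mem_erase.2 ⟨hxa, hx⟩))
        rw [Finset.mem_coe, hxy] at h2
        exact (Finset.mem_erase.1 h2).1 rfl
      · simp only [if_neg hxa, if_neg hya] at hxy
        exact hψ'bij.injOn (Finset.mem_coe.2 (Finset.mem_erase.2 ⟨hxa, hx⟩))
          (Finset.mem_coe.2 (Finset.mem_erase.2 ⟨hya, hy⟩)) hxy
    · intro z hz
      rw [Finset.mem_coe] at hz
      by_cases hzb : z = b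
      · exact ⟨a, Finset.mem_coe.2 ha, by simp [hzb]⟩
      · obtain ⟨x, hx, hxz⟩ := hψ'bij.surjOn (Finset.mem_coe.2 (Finset.mem_erase.2 ⟨hzb, hz⟩))
        rw [Finset.mem_coe, Finset.mem_erase] at hx
        exact ⟨x, Finset.mem_coe.2 hx.2, by simp only [if_neg hx.1]; exact hxz⟩
    · intro x hx
      by_cases hxa : x = a
      · simp only [if_pos hxa]; rw [hgb, hxa]
      · simp only [if_neg hxa]
        exact hψ'h x (Finset.mem_erase.2 ⟨hxa, hx⟩)

lemma key (t s : FTree) (hts : t.SelfNested) (hss : s.SelfNested)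
    (hprof : ∀ h1 h2, h2 < h1 → t.profile h1 h2 = s.profile h1 h2) :
    ∀ h v, v ∈ t.supp → ∀ w, w ∈ s.supp → t.heightAt v = h → s.heightAt w = h →
      SubtreeIso t v s w := by
  intro h
  induction h using Nat.strong_induction_on with
  | _ h IH =>
  intro v hv w hw hhv hhw
  -- Step 1: equality of γ values
  have hgam : ∀ k, t.gam v k = s.gam w k := by
    intro k
    by_cases hk : k < h
    · have h1 : t.gam v k ∈ t.profile h k := by
        unfold profile
        exact Multiset.mem_map.2 ⟨v, Finset.mem_def.1 (Finset.mem_filter.2 ⟨hv, hhv⟩), rfl⟩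
      rw [hprof h k hk] at h1
      obtain ⟨u, hu, he⟩ := Multiset.mem_map.1 h1
      obtain ⟨hus, hhu⟩ := Finset.mem_filter.1 (Finset.mem_def.2 hu)
      have h2 : s.gam u k = s.gam w k :=
        subtreeIso_gam (hss u hus w hw (hhu.trans hhw.symm)) hus k
      rw [← he, h2]
    · unfold gam
      rw [Finset.filter_false_of_mem, Finset.filter_false_of_mem]
      · intro c hc
        have h2 := heightAt_lt_of_child hc
        rw [hhw] at h2
        omega
      · intro c hc
        have h2 := heightAt_lt_of_child hc
        rw [hhv] at h2
        omega
  -- Step 2: matching of children preserving subtree height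
  obtain ⟨ψ, hψ, hψh⟩ := exists_matching (t.children v).card (t.children v) (s.children w)
    t.heightAt s.heightAt rfl (fun k => hgam k)
  have hψmem : ∀ c ∈ t.children v, ψ c ∈ s.children w := fun c hc =>
    Finset.mem_coe.1 (hψ.mapsTo (Finset.mem_coe.2 hc))
  -- Step 3: isomorphisms of child subtrees from the induction hypothesis
  have hiso : ∀ c ∈ t.children v, SubtreeIso t c s (ψ c) := by
    intro c hc
    have hch := heightAt_lt_of_child hc
    rw [hhv] at hch
    exact IH _ hch c (mem_children.1 hc).1 (ψ c) (mem_children.1 (hψmem c hc)).1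
      rfl (hψh c hc)
  classical
  let Φ : ℕ → ℕ → ℕ := fun c => if hc : SubtreeIso t c s (ψ c) then Classical.choose hc else id
  have hΦ : ∀ c ∈ t.children v,
      Set.BijOn (Φ c) (t.desc c : Set ℕ) (s.desc (ψ c) : Set ℕ) ∧ Φ c c = ψ c ∧
        ∀ x ∈ t.desc c, x ≠ c → Φ c (t.par x) = s.par (Φ c x) := by
    intro c hc
    have hI := hiso c hc
    simp only [Φ, dif_pos hI]
    exact Classical.choose_spec hI
  -- glue
  have hmain : ∀ x ∈ t.desc v, x ≠ v →
      t.par^[t.depth x - t.depth v - 1] x ∈ t.children v ∧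
        x ∈ t.desc (t.par^[t.depth x - t.depth v - 1] x) :=
    fun x hx hxv => anc_spec hx hxv
  have hφeq : ∀ c ∈ t.children v, ∀ x ∈ t.desc c,
      (if x = v then w else Φ (t.par^[t.depth x - t.depth v - 1] x) x) = Φ c x := by
    intro c hc x hx
    have hxv : x ≠ v := by
      intro h
      have h1 := (child_mem_desc hc).2.1
      have h2 := (desc_facts hx).2.1
      rw [h] at h2
      omega
    rw [if_neg hxv, anc_unique hc hx]
  refine ⟨fun x => if x = v then w else Φ (t.par^[t.depth x - t.depth v - 1] x) x,
    ⟨?_, ?_, ?_⟩, by simp, ?_⟩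
  · -- MapsTo
    intro x hx
    rw [Finset.mem_coe] at hx
    by_cases hxv : x = v
    · simp only [if_pos hxv]; exact Finset.mem_coe.2 (self_mem_desc hw)
    · obtain ⟨hc, hxc⟩ := hmain x hx hxv
      simp only []
      rw [hφeq _ hc _ hxc]
      have h1 : Φ (t.par^[t.depth x - t.depth v - 1] x) x
          ∈ s.desc (ψ (t.par^[t.depth x - t.depth v - 1] x)) :=
        Finset.mem_coe.1 ((hΦ _ hc).1.mapsTo (Finset.mem_coe.2 hxc))
      exact Finset.mem_coe.2 (desc_trans (child_mem_desc (hψmem _ hc)).1 h1)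
  · -- InjOn
    intro x hx y hy hxy
    rw [Finset.mem_coe] at hx hy
    simp only [] at hxy
    by_cases hxv : x = v <;> by_cases hyv : y = v
    · rw [hxv, hyv]
    · exfalso
      obtain ⟨hc, hyc⟩ := hmain y hy hyv
      rw [if_pos hxv, hφeq _ hc _ hyc] at hxy
      have h1 : Φ (t.par^[t.depth y - t.depth v - 1] y) y
          ∈ s.desc (ψ (t.par^[t.depth y - t.depth v - 1] y)) :=
        Finset.mem_coe.1 ((hΦ _ hc).1.mapsTo (Finset.mem_coe.2 hyc))
      rw [← hxy] at h1
      have h2 := (desc_facts h1).2.1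
      have h3 := (child_mem_desc (hψmem _ hc)).2.1
      omega
    · exfalso
      obtain ⟨hc, hxc⟩ := hmain x hx hxv
      rw [if_pos hyv, hφeq _ hc _ hxc] at hxy
      have h1 : Φ (t.par^[t.depth x - t.depth v - 1] x) x
          ∈ s.desc (ψ (t.par^[t.depth x - t.depth v - 1] x)) :=
        Finset.mem_coe.1 ((hΦ _ hc).1.mapsTo (Finset.mem_coe.2 hxc))
      rw [hxy] at h1
      have h2 := (desc_facts h1).2.1
      have h3 := (child_mem_desc (hψmem _ hc)).2.1
      omega
    · obtain ⟨hc1, hxc⟩ := hmain x hx hxv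
      obtain ⟨hc2, hyc⟩ := hmain y hy hyv
      rw [hφeq _ hc1 _ hxc, hφeq _ hc2 _ hyc] at hxy
      by_cases hcc : t.par^[t.depth x - t.depth v - 1] x = t.par^[t.depth y - t.depth v - 1] y
      · rw [hcc] at hxy
        exact (hΦ _ hc2).1.injOn (Finset.mem_coe.2 (hcc ▸ hxc)) (Finset.mem_coe.2 hyc) hxy
      · exfalso
        have h1 : Φ (t.par^[t.depth x - t.depth v - 1] x) x
            ∈ s.desc (ψ (t.par^[t.depth x - t.depth v - 1] x)) :=
          Finset.mem_coe.1 ((hΦ _ hc1).1.mapsTo (Finset.mem_coe.2 hxc))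
        have h2 : Φ (t.par^[t.depth y - t.depth v - 1] y) y
            ∈ s.desc (ψ (t.par^[t.depth y - t.depth v - 1] y)) :=
          Finset.mem_coe.1 ((hΦ _ hc2).1.mapsTo (Finset.mem_coe.2 hyc))
      
        rw [← hxy] at h2
        have h3 := (anc_unique (hψmem _ hc1) h1).symm.trans (anc_unique (hψmem _ hc2) h2)
        exact hcc (hψ.injOn (Finset.mem_coe.2 hc1) (Finset.mem_coe.2 hc2) h3)
  · -- SurjOn
    intro z hz
    rw [Finset.mem_coe] at hz
    by_cases hzw : z = w
    · exact ⟨v, Finset.mem_coe.2 (self_mem_desc hv), by simp [hzw]⟩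
    · obtain ⟨hc', hzc⟩ := anc_spec hz hzw
      obtain ⟨c, hc, hcc⟩ := hψ.surjOn (Finset.mem_coe.2 hc')
      rw [Finset.mem_coe] at hc
      rw [← hcc] at hzc
      obtain ⟨x, hx, hxe⟩ := (hΦ _ hc).1.surjOn (Finset.mem_coe.2 hzc)
      rw [Finset.mem_coe] at hx
      refine ⟨x, Finset.mem_coe.2 (desc_trans (child_mem_desc hc).1 hx), ?_⟩
      simp only []
      rw [hφeq _ hc _ hx]
      exact hxe
  · -- parent condition
    intro x hx hxv
    obtain ⟨hc, hxc⟩ := hmain x hx hxv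
    simp only []
    by_cases hxisc : x = t.par^[t.depth x - t.depth v - 1] x
    · have hxch : x ∈ t.children v := hxisc ▸ hc
      have hpx : t.par x = v := (mem_children.1 hxch).2.1
      rw [hpx, if_pos rfl, hφeq _ hc _ hxc, ← hxisc]
      have h1 : Φ x x = ψ x := by
        have := (hΦ _ hxch).2.1
        rw [← hxisc] at hc
        exact (hΦ _ hxch).2.1
      rw [h1]
      exact ((mem_children.1 (hψmem _ hxch)).2.1).symm
    · have hpxd := (par_mem_desc hxc (fun h => hxisc h)).1
      rw [hφeq _ hc _ hxc, hφeq _ hc _ hpxd]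
      exact (hΦ _ hc).2.2 x hxc (fun h => hxisc h)

lemma height_le_of_profile (t s : FTree)
    (hprof : ∀ h1 h2, h2 < h1 → t.profile h1 h2 = s.profile h1 h2) :
    t.height ≤ s.height := by
  by_cases h0 : t.height = 0
  · omega
  · have h1 : t.gam t.root 0 ∈ t.profile t.height 0 := by
      unfold profile
      exact Multiset.mem_map.2 ⟨t.root, Finset.mem_def.1
        (Finset.mem_filter.2 ⟨t.root_mem, rfl⟩), rfl⟩
    rw [hprof t.height 0 (by omega)] at h1
    obtain ⟨u, hu, _⟩ := Multiset.mem_map.1 h1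
    obtain ⟨hus, hhu⟩ := Finset.mem_filter.1 (Finset.mem_def.2 hu)
    rw [← hhu]
    exact heightAt_le_height hus

end FTree

/-- Two self-nested trees having the same height profile (the same
multiset `ρ(h1,h2)` for every pair of heights `h2 < h1`) are isomorphic: a self-nested
tree is uniquely reconstructed from its height profile. -/
theorem selfNested_iso_of_profile_eq (t s : FTree)
    (ht : t.SelfNested) (hs : s.SelfNested)
    (hprof : ∀ h1 h2, h2 < h1 → t.profile h1 h2 = s.profile h1 h2) :
    FTree.TreeIso t s := by
  have h1 : t.height = s.height :=
    le_antisymm (FTree.height_le_of_profile t s hprof)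
      (FTree.height_le_of_profile s t (fun h1 h2 hh => (hprof h1 h2 hh).symm))
  exact FTree.key t s ht hs hprof t.height t.root t.root_mem s.root s.root_mem rfl h1.symm
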